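/- The function f(x₁,x₂) = a₁·x₁²/√(x₁x₂) − a₂·√(x₁x₂) is convex on the domain {(x₁,x₂) : x₁ > 0, x₂ > 0}, for any positive constants a₁, a₂. -/

import Mathlib

theorem stmt0 (a₁ a₂ : ℝ) (ha₁ : 0 < a₁) (ha₂ : 0 < a₂) :
    ConvexOn ℝ {p : ℝ × ℝ | 0 < p.1 ∧ 0 < p.2}
      (fun p => a₁ * p.1 ^ 2 / Real.sqrt (p.1 * p.2) - a₂ * Real.sqrt (p.1 * p.2)) := by
  constructor
  · intro p hp q hq t s ht hs hts
    constructor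
    · simp only [Prod.fst_add, Prod.smul_fst, smul_eq_mul]
      rcases lt_or_eq_of_le ht with h | h
      · exact add_pos_of_pos_of_nonneg (mul_pos h hp.1) (mul_nonneg hs hq.1.le)
      · have hs1 : s = 1 := by linarith
        simp [← h, hs1, hq.1]
    · simp only [Prod.snd_add, Prod.smul_snd, smul_eq_mul]
      rcases lt_or_eq_of_le ht with h | h
      · exact add_pos_of_pos_of_nonneg (mul_pos h hp.2) (mul_nonneg hs hq.2.le)
      · have hs1 : s = 1 := by linarith
        simp [← h, hs1, hq.2]
  · intro p hp q hq t s ht hs hts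
    obtain ⟨hx1, hx2⟩ := hp
    obtain ⟨hy1, hy2⟩ := hq
    set x1 := p.1; set x2 := p.2; set y1 := q.1; set y2 := q.2
    simp only [Prod.fst_add, Prod.snd_add, Prod.smul_fst, Prod.smul_snd, smul_eq_mul]
    set A := Real.sqrt (x1 * x2) with hAdef
    set B := Real.sqrt (y1 * y2) with hBdef
    set C := Real.sqrt ((t * x1 + s * y1) * (t * x2 + s * y2)) with hCdef
    have hA : 0 < A := Real.sqrt_pos.mpr (mul_pos hx1 hx2)
    have hB : 0 < B := Real.sqrt_pos.mpr (mul_pos hy1 hy2)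
    have hA2 : A ^ 2 = x1 * x2 := Real.sq_sqrt (mul_pos hx1 hx2).le
    have hB2 : B ^ 2 = y1 * y2 := Real.sq_sqrt (mul_pos hy1 hy2).le
    -- AM-GM : 2 A B ≤ x1 y2 + x2 y1
    have hABmul : A * B = Real.sqrt ((x1 * y2) * (x2 * y1)) := by
      rw [hAdef, hBdef, ← Real.sqrt_mul (mul_pos hx1 hx2).le]
      ring_nf
    have hAMGM : 2 * (A * B) ≤ x1 * y2 + x2 * y1 := by
      have h := Real.sqrt_le_sqrt (show (x1 * y2) * (x2 * y1) ≤ ((x1 * y2 + x2 * y1) / 2) ^ 2 by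
        nlinarith [sq_nonneg (x1 * y2 - x2 * y1)])
      rw [Real.sqrt_sq (by positivity)] at h
      rw [hABmul]; linarith
    -- concavity of sqrt of product
    have hsum0 : 0 ≤ t * A + s * B := by
      positivity
    have h1 : t * A + s * B ≤ C := by
      have hmul : (t * s) * (2 * (A * B)) ≤ (t * s) * (x1 * y2 + x2 * y1) :=
        mul_le_mul_of_nonneg_left hAMGM (mul_nonneg ht hs)
      rw [hCdef, show (t:ℝ) * A + s * B = √((t * A + s * B) ^ 2) from (Real.sqrt_sq hsum0).symm]
      apply Real.sqrt_le_sqrt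
      have e1 : t ^ 2 * A ^ 2 = t ^ 2 * (x1 * x2) := by rw [hA2]
      have e2 : s ^ 2 * B ^ 2 = s ^ 2 * (y1 * y2) := by rw [hB2]
      nlinarith [hmul, e1, e2]
    have hden : 0 < t * A + s * B := by
      rcases lt_or_eq_of_le ht with h | h
      · exact add_pos_of_pos_of_nonneg (mul_pos h hA) (mul_nonneg hs hB.le)
      · have hs1 : s = 1 := by linarith
        simp [← h, hs1, hB]
    have hC : 0 < C := lt_of_lt_of_le hden h1
    -- Cauchy-Schwarz step
    have polykey : (t * x1 + s * y1) ^ 2 * (A * B) ≤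
        (t * (x1 ^ 2 * B) + s * (y1 ^ 2 * A)) * (t * A + s * B) := by
      nlinarith [mul_nonneg (mul_nonneg ht hs) (sq_nonneg (x1 * B - y1 * A)), hA.le, hB.le]
    have key : (t * x1 + s * y1) ^ 2 ≤ (t * (x1 ^ 2 / A) + s * (y1 ^ 2 / B)) * (t * A + s * B) := by
      have heq : t * (x1 ^ 2 / A) + s * (y1 ^ 2 / B) =
          (t * (x1 ^ 2 * B) + s * (y1 ^ 2 * A)) / (A * B) := by
        field_simp
      rw [heq, div_mul_eq_mul_div, le_div_iff₀ (mul_pos hA hB)]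
      linarith [polykey]
    have h2 : (t * x1 + s * y1) ^ 2 / C ≤ t * (x1 ^ 2 / A) + s * (y1 ^ 2 / B) := by
      calc (t * x1 + s * y1) ^ 2 / C ≤ (t * x1 + s * y1) ^ 2 / (t * A + s * B) :=
            div_le_div_of_nonneg_left (sq_nonneg _) hden h1
        _ ≤ t * (x1 ^ 2 / A) + s * (y1 ^ 2 / B) := by
            rw [div_le_iff₀ hden]
            exact key
    have e1 : a₁ * (t * x1 + s * y1) ^ 2 / C = a₁ * ((t * x1 + s * y1) ^ 2 / C) := by ring
    have m1 : a₁ * ((t * x1 + s * y1) ^ 2 / C) ≤ a₁ * (t * (x1 ^ 2 / A) + s * (y1 ^ 2 / B)) :=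
      mul_le_mul_of_nonneg_left h2 ha₁.le
    have m2 : a₂ * (t * A + s * B) ≤ a₂ * C := mul_le_mul_of_nonneg_left h1 ha₂.le
    have goal_eq : t * (a₁ * x1 ^ 2 / A - a₂ * A) + s * (a₁ * y1 ^ 2 / B - a₂ * B) =
        a₁ * (t * (x1 ^ 2 / A) + s * (y1 ^ 2 / B)) - a₂ * (t * A + s * B) := by ring
    show a₁ * (t * x1 + s * y1) ^ 2 / C - a₂ * C ≤ _
    rw [goal_eq, e1]
    linarith
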